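/- Consider the homogeneous recursion [a(a+θ_A−1) + b(b+θ_B−1)] g(a,b) = ∑_i a_i(a_i−1) g(a−e_i,b) + ∑_j b_j(b_j−1) g(a,b−e_j) + θ_A ∑_{i,k} a_i P^A_{ki} g(a−e_i+e_k,b) + θ_B ∑_{j,l} b_j P^B_{lj} g(a,b−e_j+e_l) for g : ℕ^K × ℕ^L → ℝ, with θ_A, θ_B > 0, P^A, P^B stochastic matrices, and boundary conditions g(e_i, 0) = 0, g(0, e_j) = 0, g(e_i, e_j) = 0 for all i, j (and g ≡ 0 on configurations with negative entries). Then g(a,b) = 0 for all configurations (a,b). -/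

import Mathlib

/-- Configuration `a - e_i` (with truncated subtraction). -/
def sub1 {K : ℕ} (a : Fin K → ℕ) (i : Fin K) : Fin K → ℕ :=
  Function.update a i (a i - 1)

/-- Configuration `a + e_k`. -/
def add1 {K : ℕ} (a : Fin K → ℕ) (k : Fin K) : Fin K → ℕ :=
  Function.update a k (a k + 1)

namespace Stmt8Aux

/-- weight `∏ i, 1/(a i)!` -/
noncomputable def W {K : ℕ} (a : Fin K → ℕ) : ℝ := ∏ i, ((a i).factorial : ℝ)⁻¹

lemma W_pos {K : ℕ} (a : Fin K → ℕ) : 0 < W a := by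
  apply Finset.prod_pos
  intro i _
  positivity

/-- the slice of configurations with total size `n` -/
def slice (K n : ℕ) : Finset (Fin K → ℕ) :=
  (Finset.Iic fun _ => n).filter fun a => ∑ j, a j = n

lemma mem_slice {K n : ℕ} {a : Fin K → ℕ} : a ∈ slice K n ↔ ∑ j, a j = n := by
  constructor
  · intro h; exact (Finset.mem_filter.mp h).2
  · intro h
    refine Finset.mem_filter.mpr ⟨?_, h⟩
    simp only [Finset.mem_Iic, Pi.le_def]
    intro i
    rw [← h]
    exact Finset.single_le_sum (fun j _ => Nat.zero_le _) (Finset.mem_univ i)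

lemma sum_add1 {K : ℕ} (a : Fin K → ℕ) (k : Fin K) :
    ∑ j, add1 a k j = (∑ j, a j) + 1 := by
  unfold add1
  rw [Finset.sum_update_of_mem (Finset.mem_univ k)]
  rw [← Finset.sum_erase_add _ _ (Finset.mem_univ k), Finset.sdiff_singleton_eq_erase]
  ring

lemma sum_sub1 {K : ℕ} (a : Fin K → ℕ) (i : Fin K) (h : a i ≠ 0) :
    (∑ j, sub1 a i j) + 1 = ∑ j, a j := by
  unfold sub1
  rw [Finset.sum_update_of_mem (Finset.mem_univ i)]
  rw [← Finset.sum_erase_add _ a (Finset.mem_univ i), Finset.sdiff_singleton_eq_erase]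
  omega

lemma cancel {K : ℕ} (a : Fin K → ℕ) (i k : Fin K) (h : a i ≠ 0) :
    add1 (sub1 (add1 (sub1 a i) k) k) i = a := by
  funext j
  simp only [add1, sub1, Function.update]
  by_cases hji : j = i <;> by_cases hjk : j = k <;>
    simp_all <;> omega

lemma add1_sub1_ne_zero {K : ℕ} (a : Fin K → ℕ) (i k : Fin K) :
    add1 (sub1 a i) k k ≠ 0 := by
  simp [add1, Function.update]

lemma W_update {K : ℕ} (a : Fin K → ℕ) (i : Fin K) (v : ℕ) :
    W (Function.update a i v) = ((v.factorial : ℝ))⁻¹ * ((a i).factorial : ℝ) * W a := by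
  unfold W
  rw [← Finset.mul_prod_erase Finset.univ _ (Finset.mem_univ i),
      ← Finset.mul_prod_erase Finset.univ (fun j => (((a j).factorial : ℝ))⁻¹) (Finset.mem_univ i)]
  have h1 : ∏ x ∈ Finset.univ.erase i, (((Function.update a i v x).factorial : ℝ))⁻¹
      = ∏ x ∈ Finset.univ.erase i, (((a x).factorial : ℝ))⁻¹ := by
    apply Finset.prod_congr rfl
    intro x hx
    rw [Function.update_of_ne (Finset.ne_of_mem_erase hx)]
  rw [h1, Function.update_self]
  have h2 : ((a i).factorial : ℝ) ≠ 0 := Nat.cast_ne_zero.mpr (Nat.factorial_ne_zero _)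
  field_simp

lemma wkey {K : ℕ} (a : Fin K → ℕ) (i k : Fin K) (h : a i ≠ 0) :
    W (add1 (sub1 a i) k) * ((add1 (sub1 a i) k k : ℕ) : ℝ) = W a * (a i : ℝ) := by
  by_cases hik : i = k
  · subst hik
    have : add1 (sub1 a i) i = a := by
      funext j
      simp only [add1, sub1, Function.update]
      by_cases hj : j = i <;> simp_all <;> omega
    rw [this]
  · have hk : sub1 a i k = a k := by
      simp [sub1, Function.update_of_ne (Ne.symm hik)]
    have hval : add1 (sub1 a i) k k = a k + 1 := by
      simp [add1, Function.update_self, hk]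
    rw [hval]
    unfold add1
    rw [W_update, hk]
    unfold sub1
    rw [W_update]
    have h2 : ∀ m : ℕ, ((m.factorial : ℝ)) ≠ 0 := fun m => Nat.cast_ne_zero.mpr (Nat.factorial_ne_zero _)
    have e1 : ((a k + 1).factorial : ℝ) = (a k + 1) * (a k).factorial := by
      push_cast [Nat.factorial_succ]; ring
    have e2 : ((a i).factorial : ℝ) = (a i) * ((a i - 1).factorial) := by
      have : a i = (a i - 1) + 1 := by omega
      rw [this, Nat.factorial_succ]
      push_cast
      ring_nf
    rw [e1, e2]
    field_simp
    push_cast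
    ring

/-- The key change-of-variables identity. -/
lemma reindex {K : ℕ} (n : ℕ) (i k : Fin K) (F : (Fin K → ℕ) → ℝ) :
    ∑ a ∈ slice K n, W a * (a i : ℝ) * F (add1 (sub1 a i) k)
      = ∑ a ∈ slice K n, W a * (a k : ℝ) * F a := by
  have h1 : ∀ x ∈ slice K n, W x * (x i : ℝ) * F (add1 (sub1 x i) k) ≠ 0 → x i ≠ 0 := by
    intro x _ hne h0
    apply hne
    rw [h0]
    simp
  have h2 : ∀ x ∈ slice K n, W x * (x k : ℝ) * F x ≠ 0 → x k ≠ 0 := by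
    intro x _ hne h0
    apply hne
    rw [h0]
    simp
  calc ∑ a ∈ slice K n, W a * (a i : ℝ) * F (add1 (sub1 a i) k)
      = ∑ a ∈ (slice K n).filter (fun a => a i ≠ 0), W a * (a i : ℝ) * F (add1 (sub1 a i) k) :=
        (Finset.sum_filter_of_ne h1).symm
    _ = ∑ a ∈ (slice K n).filter (fun a => a k ≠ 0), W a * (a k : ℝ) * F a := ?_
    _ = ∑ a ∈ slice K n, W a * (a k : ℝ) * F a := Finset.sum_filter_of_ne h2
  refine Finset.sum_nbij' (fun a => add1 (sub1 a i) k) (fun a => add1 (sub1 a k) i) ?_ ?_ ?_ ?_ ?_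
  · intro a ha
    simp only [Finset.mem_filter, mem_slice] at ha ⊢
    obtain ⟨ha1, ha2⟩ := ha
    refine ⟨?_, add1_sub1_ne_zero a i k⟩
    rw [sum_add1]
    have := sum_sub1 a i ha2
    omega
  · intro a ha
    simp only [Finset.mem_filter, mem_slice] at ha ⊢
    obtain ⟨ha1, ha2⟩ := ha
    refine ⟨?_, add1_sub1_ne_zero a k i⟩
    rw [sum_add1]
    have := sum_sub1 a k ha2
    omega
  · intro a ha
    simp only [Finset.mem_filter, mem_slice] at ha
    exact cancel a i k ha.2
  · intro a ha
    simp only [Finset.mem_filter, mem_slice] at ha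
    exact cancel a k i ha.2
  · intro a ha
    simp only [Finset.mem_filter, mem_slice] at ha
    rw [← wkey a i k ha.2]


lemma step {K : ℕ} (n : ℕ) (P : Matrix (Fin K) (Fin K) ℝ) (hProw : ∀ k, ∑ i, P k i = 1)
    (F : (Fin K → ℕ) → ℝ) :
    ∑ a ∈ slice K n, W a * (∑ i, ∑ k, (a i : ℝ) * P k i * F (add1 (sub1 a i) k))
      = (n : ℝ) * ∑ a ∈ slice K n, W a * F a := by
  have e1 : ∀ a ∈ slice K n, W a * (∑ i, ∑ k, (a i : ℝ) * P k i * F (add1 (sub1 a i) k))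
      = ∑ i, ∑ k, P k i * (W a * (a i : ℝ) * F (add1 (sub1 a i) k)) := by
    intro a _
    rw [Finset.mul_sum]
    refine Finset.sum_congr rfl fun i _ => ?_
    rw [Finset.mul_sum]
    refine Finset.sum_congr rfl fun k _ => ?_
    ring
  rw [Finset.sum_congr rfl e1, Finset.sum_comm]
  have e2 : ∀ i, ∑ a ∈ slice K n, ∑ k, P k i * (W a * (a i : ℝ) * F (add1 (sub1 a i) k))
      = ∑ k, P k i * ∑ a ∈ slice K n, W a * (a k : ℝ) * F a := by
    intro i
    rw [Finset.sum_comm]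
    refine Finset.sum_congr rfl fun k _ => ?_
    rw [← Finset.mul_sum, reindex n i k F]
  rw [Finset.sum_congr rfl fun i _ => e2 i, Finset.sum_comm]
  have e3 : ∀ k, ∑ i, P k i * ∑ a ∈ slice K n, W a * (a k : ℝ) * F a
      = ∑ a ∈ slice K n, W a * (a k : ℝ) * F a := by
    intro k
    rw [← Finset.sum_mul, hProw k, one_mul]
  rw [Finset.sum_congr rfl fun k _ => e3 k, Finset.sum_comm]
  rw [Finset.mul_sum]
  refine Finset.sum_congr rfl fun a ha => ?_
  have hsum : ∑ k, (a k : ℝ) = (n : ℝ) := by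
    rw [← Nat.cast_sum, mem_slice.mp ha]
  calc ∑ k, W a * (a k : ℝ) * F a = (∑ k, (a k : ℝ)) * (W a * F a) := by
        rw [Finset.sum_mul]
        exact Finset.sum_congr rfl fun k _ => by ring
    _ = (n : ℝ) * (W a * F a) := by rw [hsum]

lemma eq_zero_of_sum_eq_zero {K : ℕ} {a : Fin K → ℕ} (h : ∑ i, a i = 0) : a = 0 := by
  funext i
  exact Finset.sum_eq_zero_iff.mp h i (Finset.mem_univ i)

lemma eq_single_of_sum_eq_one {K : ℕ} {a : Fin K → ℕ} (h : ∑ i, a i = 1) :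
    ∃ i, a = Pi.single i 1 := by
  have hex : ∃ i, a i ≠ 0 := by
    by_contra hc
    push_neg at hc
    rw [Finset.sum_eq_zero fun i _ => hc i] at h
    omega
  obtain ⟨i, hi⟩ := hex
  have hle : a i ≤ 1 := h ▸ Finset.single_le_sum (fun j _ => Nat.zero_le _) (Finset.mem_univ i)
  have hai : a i = 1 := by omega
  have hsplit := Finset.add_sum_erase Finset.univ a (Finset.mem_univ i)
  have hrest : ∀ j ∈ Finset.univ.erase i, a j = 0 := by
    have h0 : ∑ j ∈ Finset.univ.erase i, a j = 0 := by omega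
    exact fun j hj => Finset.sum_eq_zero_iff.mp h0 j hj
  refine ⟨i, funext fun j => ?_⟩
  by_cases hj : j = i
  · subst hj; rw [Pi.single_eq_same, hai]
  · rw [Pi.single_eq_of_ne hj]
    exact hrest j (Finset.mem_erase.mpr ⟨hj, Finset.mem_univ j⟩)

lemma coef_nonneg (m : ℕ) (θ : ℝ) (hθ : 0 < θ) : 0 ≤ (m : ℝ) * ((m : ℝ) + θ - 1) := by
  rcases Nat.eq_zero_or_pos m with h | h
  · subst h; simp
  · have h1 : (1 : ℝ) ≤ (m : ℝ) := by exact_mod_cast h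
    nlinarith

lemma drift_nonneg (m : ℕ) : 0 ≤ (m : ℝ) * ((m : ℝ) - 1) := by
  rcases Nat.eq_zero_or_pos m with h | h
  · subst h; simp
  · have h1 : (1 : ℝ) ≤ (m : ℝ) := by exact_mod_cast h
    nlinarith

end Stmt8Aux

open Stmt8Aux in
/-- Uniqueness for the homogeneous two-locus recursion: if `g` satisfies the
neutral recursion with stochastic mutation matrices `P^A`, `P^B` and `θ_A,
θ_B > 0`, and all boundary values (configurations of total size 1 and 2 with
no doubly-specified gametes) vanish, then `g` vanishes on every sample
configuration. -/
theorem stmt8 (K L : ℕ) (θA θB : ℝ) (hθA : 0 < θA) (hθB : 0 < θB)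
    (PA : Matrix (Fin K) (Fin K) ℝ) (PB : Matrix (Fin L) (Fin L) ℝ)
    (hPA : ∀ k i, 0 ≤ PA k i) (hPArow : ∀ k, ∑ i, PA k i = 1)
    (hPB : ∀ l j, 0 ≤ PB l j) (hPBrow : ∀ l, ∑ j, PB l j = 1)
    (g : (Fin K → ℕ) → (Fin L → ℕ) → ℝ)
    (hrec : ∀ (a : Fin K → ℕ) (b : Fin L → ℕ),
      ((∑ i, (a i : ℝ)) * ((∑ i, (a i : ℝ)) + θA - 1) +
          (∑ j, (b j : ℝ)) * ((∑ j, (b j : ℝ)) + θB - 1)) * g a b =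
        (∑ i, (a i : ℝ) * ((a i : ℝ) - 1) * g (sub1 a i) b) +
          (∑ j, (b j : ℝ) * ((b j : ℝ) - 1) * g a (sub1 b j)) +
          θA * ∑ i, ∑ k, (a i : ℝ) * PA k i * g (add1 (sub1 a i) k) b +
          θB * ∑ j, ∑ l, (b j : ℝ) * PB l j * g a (add1 (sub1 b j) l))
    (hb1 : ∀ i, g (Pi.single i 1) 0 = 0)
    (hb2 : ∀ j, g 0 (Pi.single j 1) = 0)
    (hb3 : ∀ i j, g (Pi.single i 1) (Pi.single j 1) = 0) :
    ∀ (a : Fin K → ℕ) (b : Fin L → ℕ), 1 ≤ (∑ i, a i) + ∑ j, b j → g a b = 0 := by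
  intro a0 b0 hab
  suffices H : ∀ n, ∀ (a : Fin K → ℕ) (b : Fin L → ℕ),
      (∑ i, a i) + ∑ j, b j = n → 1 ≤ n → g a b = 0 by
    exact H _ a0 b0 rfl hab
  intro n
  induction n using Nat.strong_induction_on with
  | _ n IH =>
  intro a b hn hn1
  by_cases hsmall : (∑ i, a i) ≤ 1 ∧ (∑ j, b j) ≤ 1
  · obtain ⟨hA, hB⟩ := hsmall
    rcases Nat.le_one_iff_eq_zero_or_eq_one.mp hA with hA0 | hA1
    · rcases Nat.le_one_iff_eq_zero_or_eq_one.mp hB with hB0 | hB1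
      · omega
      · obtain ⟨j, hj⟩ := eq_single_of_sum_eq_one hB1
        rw [eq_zero_of_sum_eq_zero hA0, hj]
        exact hb2 j
    · obtain ⟨i, hi⟩ := eq_single_of_sum_eq_one hA1
      rcases Nat.le_one_iff_eq_zero_or_eq_one.mp hB with hB0 | hB1
      · rw [eq_zero_of_sum_eq_zero hB0, hi]
        exact hb1 i
      · obtain ⟨j, hj⟩ := eq_single_of_sum_eq_one hB1
        rw [hi, hj]
        exact hb3 i j
  · have h2 : 2 ≤ ∑ i, a i ∨ 2 ≤ ∑ j, b j := by
      by_contra hc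
      push_neg at hc
      exact hsmall ⟨by omega, by omega⟩
    obtain ⟨nA, hnA⟩ : ∃ m, ∑ i, a i = m := ⟨_, rfl⟩
    obtain ⟨nB, hnB⟩ : ∃ m, ∑ j, b j = m := ⟨_, rfl⟩
    rw [hnA, hnB] at h2
    have hn2 : 2 ≤ n := by omega
    have haT : a ∈ slice K nA := mem_slice.mpr hnA
    have hbT : b ∈ slice L nB := mem_slice.mpr hnB
    have key : ∀ a' ∈ slice K nA, ∀ b' ∈ slice L nB,
        ((nA : ℝ) * ((nA : ℝ) + θA - 1) + (nB : ℝ) * ((nB : ℝ) + θB - 1)) * |g a' b'|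
          ≤ θA * (∑ i, ∑ k, (a' i : ℝ) * PA k i * |g (add1 (sub1 a' i) k) b'|)
            + θB * (∑ j, ∑ l, (b' j : ℝ) * PB l j * |g a' (add1 (sub1 b' j) l)|) := by
      intro a' ha' b' hb'
      have hA' : (∑ i, (a' i : ℝ)) = (nA : ℝ) := by
        rw [← Nat.cast_sum, mem_slice.mp ha']
      have hB' : (∑ j, (b' j : ℝ)) = (nB : ℝ) := by
        rw [← Nat.cast_sum, mem_slice.mp hb']
      have hrec' := hrec a' b'
      rw [hA', hB'] at hrec'
      have hdA : (∑ i, (a' i : ℝ) * ((a' i : ℝ) - 1) * g (sub1 a' i) b') = 0 := by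
        apply Finset.sum_eq_zero
        intro i _
        by_cases h1 : a' i ≤ 1
        · rcases Nat.le_one_iff_eq_zero_or_eq_one.mp h1 with h | h <;> rw [h] <;> norm_num
        · have hne : a' i ≠ 0 := by omega
          have hg0 : g (sub1 a' i) b' = 0 := by
            apply IH (n - 1) (by omega)
            · have := sum_sub1 a' i hne
              have := mem_slice.mp ha'
              have := mem_slice.mp hb'
              omega
            · omega
          rw [hg0, mul_zero]
      have hdB : (∑ j, (b' j : ℝ) * ((b' j : ℝ) - 1) * g a' (sub1 b' j)) = 0 := by
        apply Finset.sum_eq_zero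
        intro j _
        by_cases h1 : b' j ≤ 1
        · rcases Nat.le_one_iff_eq_zero_or_eq_one.mp h1 with h | h <;> rw [h] <;> norm_num
        · have hne : b' j ≠ 0 := by omega
          have hg0 : g a' (sub1 b' j) = 0 := by
            apply IH (n - 1) (by omega)
            · have := sum_sub1 b' j hne
              have := mem_slice.mp ha'
              have := mem_slice.mp hb'
              omega
            · omega
          rw [hg0, mul_zero]
      rw [hdA, hdB] at hrec'
      have hXb : |∑ i, ∑ k, (a' i : ℝ) * PA k i * g (add1 (sub1 a' i) k) b'|
          ≤ ∑ i, ∑ k, (a' i : ℝ) * PA k i * |g (add1 (sub1 a' i) k) b'| := by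
        calc |∑ i, ∑ k, (a' i : ℝ) * PA k i * g (add1 (sub1 a' i) k) b'|
            ≤ ∑ i, |∑ k, (a' i : ℝ) * PA k i * g (add1 (sub1 a' i) k) b'| :=
              Finset.abs_sum_le_sum_abs _ _
          _ ≤ ∑ i, ∑ k, |(a' i : ℝ) * PA k i * g (add1 (sub1 a' i) k) b'| :=
              Finset.sum_le_sum fun i _ => Finset.abs_sum_le_sum_abs _ _
          _ = ∑ i, ∑ k, (a' i : ℝ) * PA k i * |g (add1 (sub1 a' i) k) b'| := by
              refine Finset.sum_congr rfl fun i _ => Finset.sum_congr rfl fun k _ => ?_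
              rw [abs_mul, abs_mul, abs_of_nonneg (by positivity : (0:ℝ) ≤ (a' i : ℝ)),
                abs_of_nonneg (hPA k i)]
      have hYb : |∑ j, ∑ l, (b' j : ℝ) * PB l j * g a' (add1 (sub1 b' j) l)|
          ≤ ∑ j, ∑ l, (b' j : ℝ) * PB l j * |g a' (add1 (sub1 b' j) l)| := by
        calc |∑ j, ∑ l, (b' j : ℝ) * PB l j * g a' (add1 (sub1 b' j) l)|
            ≤ ∑ j, |∑ l, (b' j : ℝ) * PB l j * g a' (add1 (sub1 b' j) l)| :=
              Finset.abs_sum_le_sum_abs _ _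
          _ ≤ ∑ j, ∑ l, |(b' j : ℝ) * PB l j * g a' (add1 (sub1 b' j) l)| :=
              Finset.sum_le_sum fun j _ => Finset.abs_sum_le_sum_abs _ _
          _ = ∑ j, ∑ l, (b' j : ℝ) * PB l j * |g a' (add1 (sub1 b' j) l)| := by
              refine Finset.sum_congr rfl fun j _ => Finset.sum_congr rfl fun l _ => ?_
              rw [abs_mul, abs_mul, abs_of_nonneg (by positivity : (0:ℝ) ≤ (b' j : ℝ)),
                abs_of_nonneg (hPB l j)]
      have hcnn : 0 ≤ (nA : ℝ) * ((nA : ℝ) + θA - 1) + (nB : ℝ) * ((nB : ℝ) + θB - 1) :=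
        add_nonneg (coef_nonneg nA θA hθA) (coef_nonneg nB θB hθB)
      calc ((nA : ℝ) * ((nA : ℝ) + θA - 1) + (nB : ℝ) * ((nB : ℝ) + θB - 1)) * |g a' b'|
          = |((nA : ℝ) * ((nA : ℝ) + θA - 1) + (nB : ℝ) * ((nB : ℝ) + θB - 1)) * g a' b'| := by
            rw [abs_mul, abs_of_nonneg hcnn]
        _ = |θA * (∑ i, ∑ k, (a' i : ℝ) * PA k i * g (add1 (sub1 a' i) k) b')
              + θB * (∑ j, ∑ l, (b' j : ℝ) * PB l j * g a' (add1 (sub1 b' j) l))| := by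
            rw [hrec']
            congr 1
            ring
        _ ≤ |θA * (∑ i, ∑ k, (a' i : ℝ) * PA k i * g (add1 (sub1 a' i) k) b')|
              + |θB * (∑ j, ∑ l, (b' j : ℝ) * PB l j * g a' (add1 (sub1 b' j) l))| :=
            abs_add_le _ _
        _ = θA * |∑ i, ∑ k, (a' i : ℝ) * PA k i * g (add1 (sub1 a' i) k) b'|
              + θB * |∑ j, ∑ l, (b' j : ℝ) * PB l j * g a' (add1 (sub1 b' j) l)| := by
            rw [abs_mul, abs_mul, abs_of_pos hθA, abs_of_pos hθB]
        _ ≤ θA * (∑ i, ∑ k, (a' i : ℝ) * PA k i * |g (add1 (sub1 a' i) k) b'|)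
              + θB * (∑ j, ∑ l, (b' j : ℝ) * PB l j * |g a' (add1 (sub1 b' j) l)|) :=
            add_le_add (mul_le_mul_of_nonneg_left hXb hθA.le)
              (mul_le_mul_of_nonneg_left hYb hθB.le)
    set S : ℝ := ∑ b' ∈ slice L nB, ∑ a' ∈ slice K nA, W b' * W a' * |g a' b'| with hSdef
    have hS0 : 0 ≤ S := by
      apply Finset.sum_nonneg
      intro b' _
      apply Finset.sum_nonneg
      intro a' _
      exact mul_nonneg (mul_nonneg (W_pos _).le (W_pos _).le) (abs_nonneg _)
    have hstepA : ∀ b', ∑ a' ∈ slice K nA,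
        W a' * (∑ i, ∑ k, (a' i : ℝ) * PA k i * |g (add1 (sub1 a' i) k) b'|)
          = (nA : ℝ) * ∑ a' ∈ slice K nA, W a' * |g a' b'| :=
      fun b' => step nA PA hPArow (fun x => |g x b'|)
    have hstepB : ∀ a', ∑ b' ∈ slice L nB,
        W b' * (∑ j, ∑ l, (b' j : ℝ) * PB l j * |g a' (add1 (sub1 b' j) l)|)
          = (nB : ℝ) * ∑ b' ∈ slice L nB, W b' * |g a' b'| :=
      fun a' => step nB PB hPBrow (fun y => |g a' y|)
    have pa : ∑ b' ∈ slice L nB, ∑ a' ∈ slice K nA,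
        W b' * (W a' * (∑ i, ∑ k, (a' i : ℝ) * PA k i * |g (add1 (sub1 a' i) k) b'|))
          = (nA : ℝ) * S := by
      calc ∑ b' ∈ slice L nB, ∑ a' ∈ slice K nA,
            W b' * (W a' * (∑ i, ∑ k, (a' i : ℝ) * PA k i * |g (add1 (sub1 a' i) k) b'|))
          = ∑ b' ∈ slice L nB, W b' * ∑ a' ∈ slice K nA,
              W a' * (∑ i, ∑ k, (a' i : ℝ) * PA k i * |g (add1 (sub1 a' i) k) b'|) :=
            Finset.sum_congr rfl fun b' _ => by rw [Finset.mul_sum]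
        _ = ∑ b' ∈ slice L nB, W b' * ((nA : ℝ) * ∑ a' ∈ slice K nA, W a' * |g a' b'|) :=
            Finset.sum_congr rfl fun b' _ => by rw [hstepA b']
        _ = (nA : ℝ) * ∑ b' ∈ slice L nB, ∑ a' ∈ slice K nA, W b' * (W a' * |g a' b'|) := by
            rw [Finset.mul_sum]
            refine Finset.sum_congr rfl fun b' _ => ?_
            rw [Finset.mul_sum, Finset.mul_sum, Finset.mul_sum]
            exact Finset.sum_congr rfl fun _ _ => by ring
        _ = (nA : ℝ) * S := by
            rw [hSdef]
            congr 1
            refine Finset.sum_congr rfl fun b' _ => Finset.sum_congr rfl fun a' _ => by ring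
    have pb : ∑ b' ∈ slice L nB, ∑ a' ∈ slice K nA,
        W a' * (W b' * (∑ j, ∑ l, (b' j : ℝ) * PB l j * |g a' (add1 (sub1 b' j) l)|))
          = (nB : ℝ) * S := by
      calc ∑ b' ∈ slice L nB, ∑ a' ∈ slice K nA,
            W a' * (W b' * (∑ j, ∑ l, (b' j : ℝ) * PB l j * |g a' (add1 (sub1 b' j) l)|))
          = ∑ a' ∈ slice K nA, ∑ b' ∈ slice L nB,
            W a' * (W b' * (∑ j, ∑ l, (b' j : ℝ) * PB l j * |g a' (add1 (sub1 b' j) l)|)) :=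
            Finset.sum_comm
        _ = ∑ a' ∈ slice K nA, W a' * ∑ b' ∈ slice L nB,
              W b' * (∑ j, ∑ l, (b' j : ℝ) * PB l j * |g a' (add1 (sub1 b' j) l)|) :=
            Finset.sum_congr rfl fun a' _ => by rw [Finset.mul_sum]
        _ = ∑ a' ∈ slice K nA, W a' * ((nB : ℝ) * ∑ b' ∈ slice L nB, W b' * |g a' b'|) :=
            Finset.sum_congr rfl fun a' _ => by rw [hstepB a']
        _ = (nB : ℝ) * ∑ a' ∈ slice K nA, ∑ b' ∈ slice L nB, W a' * (W b' * |g a' b'|) := by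
            rw [Finset.mul_sum]
            refine Finset.sum_congr rfl fun a' _ => ?_
            rw [Finset.mul_sum, Finset.mul_sum, Finset.mul_sum]
            exact Finset.sum_congr rfl fun _ _ => by ring
        _ = (nB : ℝ) * ∑ b' ∈ slice L nB, ∑ a' ∈ slice K nA, W a' * (W b' * |g a' b'|) := by
            rw [Finset.sum_comm]
        _ = (nB : ℝ) * S := by
            rw [hSdef]
            congr 1
            refine Finset.sum_congr rfl fun b' _ => Finset.sum_congr rfl fun a' _ => by ring
    have hmain : ((nA : ℝ) * ((nA : ℝ) + θA - 1) + (nB : ℝ) * ((nB : ℝ) + θB - 1)) * S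
        ≤ θA * ((nA : ℝ) * S) + θB * ((nB : ℝ) * S) := by
      calc ((nA : ℝ) * ((nA : ℝ) + θA - 1) + (nB : ℝ) * ((nB : ℝ) + θB - 1)) * S
          = ∑ b' ∈ slice L nB, ∑ a' ∈ slice K nA, (W b' * W a') *
              (((nA : ℝ) * ((nA : ℝ) + θA - 1) + (nB : ℝ) * ((nB : ℝ) + θB - 1)) * |g a' b'|) := by
            rw [hSdef, Finset.mul_sum]
            refine Finset.sum_congr rfl fun b' _ => ?_
            rw [Finset.mul_sum]
            exact Finset.sum_congr rfl fun a' _ => by ring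
        _ ≤ ∑ b' ∈ slice L nB, ∑ a' ∈ slice K nA, (W b' * W a') *
              (θA * (∑ i, ∑ k, (a' i : ℝ) * PA k i * |g (add1 (sub1 a' i) k) b'|)
                + θB * (∑ j, ∑ l, (b' j : ℝ) * PB l j * |g a' (add1 (sub1 b' j) l)|)) := by
            refine Finset.sum_le_sum fun b' hb' => Finset.sum_le_sum fun a' ha' => ?_
            exact mul_le_mul_of_nonneg_left (key a' ha' b' hb')
              (mul_nonneg (W_pos _).le (W_pos _).le)
        _ = ∑ b' ∈ slice L nB, ∑ a' ∈ slice K nA,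
              (θA * (W b' * (W a' * (∑ i, ∑ k, (a' i : ℝ) * PA k i * |g (add1 (sub1 a' i) k) b'|)))
                + θB * (W a' * (W b' * (∑ j, ∑ l, (b' j : ℝ) * PB l j * |g a' (add1 (sub1 b' j) l)|)))) :=
            Finset.sum_congr rfl fun b' _ => Finset.sum_congr rfl fun a' _ => by ring
        _ = (∑ b' ∈ slice L nB, ∑ a' ∈ slice K nA,
              θA * (W b' * (W a' * (∑ i, ∑ k, (a' i : ℝ) * PA k i * |g (add1 (sub1 a' i) k) b'|))))
            + ∑ b' ∈ slice L nB, ∑ a' ∈ slice K nA,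
              θB * (W a' * (W b' * (∑ j, ∑ l, (b' j : ℝ) * PB l j * |g a' (add1 (sub1 b' j) l)|))) := by
            rw [← Finset.sum_add_distrib]
            exact Finset.sum_congr rfl fun b' _ => Finset.sum_add_distrib
        _ = θA * (∑ b' ∈ slice L nB, ∑ a' ∈ slice K nA,
              W b' * (W a' * (∑ i, ∑ k, (a' i : ℝ) * PA k i * |g (add1 (sub1 a' i) k) b'|)))
            + θB * (∑ b' ∈ slice L nB, ∑ a' ∈ slice K nA,
              W a' * (W b' * (∑ j, ∑ l, (b' j : ℝ) * PB l j * |g a' (add1 (sub1 b' j) l)|))) := by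
            congr 1
            · rw [Finset.mul_sum]
              refine Finset.sum_congr rfl fun b' _ => ?_
              rw [Finset.mul_sum]
            · rw [Finset.mul_sum]
              refine Finset.sum_congr rfl fun b' _ => ?_
              rw [Finset.mul_sum]
        _ = θA * ((nA : ℝ) * S) + θB * ((nB : ℝ) * S) := by rw [pa, pb]
    have hd : 0 < (nA : ℝ) * ((nA : ℝ) - 1) + (nB : ℝ) * ((nB : ℝ) - 1) := by
      rcases h2 with h | h
      · have h1 : (2 : ℝ) ≤ (nA : ℝ) := by exact_mod_cast h
        nlinarith [drift_nonneg nB]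
      · have h1 : (2 : ℝ) ≤ (nB : ℝ) := by exact_mod_cast h
        nlinarith [drift_nonneg nA]
    have hS_le : ((nA : ℝ) * ((nA : ℝ) - 1) + (nB : ℝ) * ((nB : ℝ) - 1)) * S
        ≤ ((nA : ℝ) * ((nA : ℝ) - 1) + (nB : ℝ) * ((nB : ℝ) - 1)) * 0 := by
      have hring : ((nA : ℝ) * ((nA : ℝ) - 1) + (nB : ℝ) * ((nB : ℝ) - 1)) * S
          = ((nA : ℝ) * ((nA : ℝ) + θA - 1) + (nB : ℝ) * ((nB : ℝ) + θB - 1)) * S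
            - (θA * ((nA : ℝ) * S) + θB * ((nB : ℝ) * S)) := by ring
      rw [hring, mul_zero]
      linarith
    have hSz : S = 0 := le_antisymm (by simpa using le_of_mul_le_mul_left hS_le hd) hS0
    have hnn : ∀ b' ∈ slice L nB, 0 ≤ ∑ a' ∈ slice K nA, W b' * W a' * |g a' b'| := by
      intro b' _
      exact Finset.sum_nonneg fun a' _ =>
        mul_nonneg (mul_nonneg (W_pos _).le (W_pos _).le) (abs_nonneg _)
    have h1 := (Finset.sum_eq_zero_iff_of_nonneg hnn).mp hSz b hbT
    have hnn2 : ∀ a' ∈ slice K nA, 0 ≤ W b * W a' * |g a' b| := fun a' _ =>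
      mul_nonneg (mul_nonneg (W_pos _).le (W_pos _).le) (abs_nonneg _)
    have h2' := (Finset.sum_eq_zero_iff_of_nonneg hnn2).mp h1 a haT
    have hWpos : 0 < W b * W a := mul_pos (W_pos _) (W_pos _)
    have : |g a b| = 0 := by
      rcases mul_eq_zero.mp h2' with h | h
      · exact absurd h (ne_of_gt hWpos)
      · exact h
    exact abs_eq_zero.mp this
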